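/- Define h : (0, ∞) → ℝ by h(c) := c·√(1/4 + 1/c) − log((√(1/4 + 1/c) − 1/2)/(√(1/4 + 1/c) + 1/2)), using the real logarithm (the argument of the logarithm lies in (0,1), so h(c) > 0). Then h is strictly increasing on (0, ∞), h(c) → 0 as c → 0⁺, and h(c) → +∞ as c → +∞. Consequently, for every d > 0 there exists exactly one c₁ > 0 with h(c₁) = d. -/

import Mathlib

open Filter Set

/-- The half-length function `h(c) = c·√(1/4 + 1/c) − log((√(1/4 + 1/c) − 1/2)/(√(1/4 + 1/c) + 1/2))`. -/
noncomputable def halfLength (c : ℝ) : ℝ :=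
  c * Real.sqrt (1/4 + 1/c)
    - Real.log ((Real.sqrt (1/4 + 1/c) - 1/2) / (Real.sqrt (1/4 + 1/c) + 1/2))

noncomputable def gAux (s : ℝ) : ℝ :=
  s / (s ^ 2 - 1/4) - (Real.log (s - 1/2) - Real.log (s + 1/2))

lemma sqrt_gt_half {c : ℝ} (hc : 0 < c) : 1/2 < Real.sqrt (1/4 + 1/c) := by
  rw [show (1:ℝ)/2 = Real.sqrt (1/4) by
    rw [show (1:ℝ)/4 = (1/2)^2 by norm_num, Real.sqrt_sq (by norm_num)]]
  exact Real.sqrt_lt_sqrt (by norm_num) (by have := one_div_pos.mpr hc; linarith)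

lemma halfLength_eq {c : ℝ} (hc : 0 < c) :
    halfLength c = gAux (Real.sqrt (1/4 + 1/c)) := by
  have hs := sqrt_gt_half hc
  set s := Real.sqrt (1/4 + 1/c) with hsdef
  have hsq : s ^ 2 = 1/4 + 1/c := Real.sq_sqrt (by positivity)
  have h1 : s ^ 2 - 1/4 = 1/c := by rw [hsq]; ring
  have h2 : s - 1/2 > 0 := by linarith
  have h3 : s + 1/2 > 0 := by linarith
  unfold halfLength gAux
  rw [h1, div_div_eq_mul_div, div_one, Real.log_div (ne_of_gt h2) (ne_of_gt h3), mul_comm]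

lemma gAux_hasDerivAt {s : ℝ} (hs : 1/2 < s) :
    HasDerivAt gAux (-(2 * s ^ 2) / (s ^ 2 - 1/4) ^ 2) s := by
  have hd : s ^ 2 - 1/4 > 0 := by nlinarith
  have h2 : s - 1/2 > 0 := by linarith
  have h3 : s + 1/2 > 0 := by linarith
  have H1 : HasDerivAt (fun x : ℝ => x / (x ^ 2 - 1/4))
      ((1 * (s ^ 2 - 1/4) - s * (2 * s ^ 1)) / (s ^ 2 - 1/4) ^ 2) s := by
    exact (hasDerivAt_id s).div ((hasDerivAt_pow 2 s).sub_const (1/4)) (ne_of_gt hd)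
  have H2 : HasDerivAt (fun x : ℝ => Real.log (x - 1/2)) (1 / (s - 1/2)) s :=
    ((hasDerivAt_id s).sub_const (1/2)).log (ne_of_gt h2)
  have H3 : HasDerivAt (fun x : ℝ => Real.log (x + 1/2)) (1 / (s + 1/2)) s :=
    ((hasDerivAt_id s).add_const (1/2)).log (ne_of_gt h3)
  have H := H1.sub (H2.sub H3)
  convert (show HasDerivAt gAux _ s from H) using 1
  have h4 : (s ^ 2 - 1/4) ≠ 0 := hd.ne'
  rw [div_sub_div _ _ h2.ne' h3.ne',
    show (s - 1/2) * (s + 1/2) = s ^ 2 - 1/4 by ring,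
    div_sub_div _ _ (pow_ne_zero 2 h4) h4,
    div_eq_div_iff (by positivity) (mul_ne_zero (pow_ne_zero 2 h4) h4)]
  ring

lemma gAux_strictAnti : StrictAntiOn gAux (Ioi (1/2 : ℝ)) := by
  apply strictAntiOn_of_deriv_neg (convex_Ioi _)
  · intro x hx
    exact ((gAux_hasDerivAt hx).continuousAt).continuousWithinAt
  · intro x hx
    rw [interior_Ioi] at hx
    rw [(gAux_hasDerivAt hx).deriv]
    have hd : x ^ 2 - 1/4 > 0 := by simp only [mem_Ioi] at hx; nlinarith
    have hx' : (0:ℝ) < x := lt_trans (by norm_num) hx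
    apply div_neg_of_neg_of_pos
    · nlinarith
    · positivity

lemma sqrt_strictAnti : ∀ a ∈ Ioi (0:ℝ), ∀ b ∈ Ioi (0:ℝ), a < b →
    Real.sqrt (1/4 + 1/b) < Real.sqrt (1/4 + 1/a) := by
  intro a ha b hb hab
  simp only [mem_Ioi] at ha hb
  apply Real.sqrt_lt_sqrt (by positivity)
  have : 1/b < 1/a := one_div_lt_one_div_of_lt ha hab
  linarith

lemma halfLength_mono : StrictMonoOn halfLength (Ioi 0) := by
  intro a ha b hb hab
  rw [halfLength_eq (mem_Ioi.mp ha), halfLength_eq (mem_Ioi.mp hb)]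
  exact gAux_strictAnti (mem_Ioi.mpr (sqrt_gt_half (mem_Ioi.mp hb)))
    (mem_Ioi.mpr (sqrt_gt_half (mem_Ioi.mp ha)))
    (sqrt_strictAnti a ha b hb hab)

lemma sqrt_tendsto_atTop : Tendsto Real.sqrt atTop atTop := by
  apply tendsto_atTop_atTop_of_monotone (fun a b hab => Real.sqrt_le_sqrt hab)
  intro b
  exact ⟨b ^ 2, by rw [Real.sqrt_sq_eq_abs]; exact le_abs_self b⟩

lemma s_tendsto_atTop :
    Tendsto (fun c : ℝ => Real.sqrt (1/4 + 1/c)) (nhdsWithin 0 (Ioi 0)) atTop := by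
  apply sqrt_tendsto_atTop.comp
  apply tendsto_atTop_add_const_left (nhdsWithin (0:ℝ) (Ioi 0)) (1/4 : ℝ)
  exact tendsto_inv_nhdsGT_zero.congr (fun x => (one_div x).symm)

lemma halfLength_tendsto_zero :
    Tendsto halfLength (nhdsWithin 0 (Ioi 0)) (nhds 0) := by
  have h1 : Tendsto (fun c : ℝ => c * Real.sqrt (1/4 + 1/c))
      (nhdsWithin 0 (Ioi 0)) (nhds 0) := by
    have key : Tendsto (fun c : ℝ => Real.sqrt (c ^ 2 / 4 + c))
        (nhdsWithin 0 (Ioi 0)) (nhds 0) := by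
      have : Tendsto (fun c : ℝ => c ^ 2 / 4 + c) (nhdsWithin 0 (Ioi 0)) (nhds 0) := by
        have := ((continuous_pow 2).div_const 4 |>.add continuous_id).tendsto (0:ℝ)
        simp only [Pi.add_apply, ne_eq, OfNat.ofNat_ne_zero, not_false_eq_true, zero_pow, zero_div,
          zero_add, id_eq] at this
        exact this.mono_left nhdsWithin_le_nhds
      simpa [Function.comp_def] using (Real.continuous_sqrt.tendsto 0).comp this
    apply key.congr'
    filter_upwards [self_mem_nhdsWithin] with c hc
    have hc' : (0:ℝ) < c := hc
    rw [show c ^ 2 / 4 + c = c ^ 2 * (1/4 + 1/c) by field_simp,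
      Real.sqrt_mul (by positivity), Real.sqrt_sq hc'.le]
  have h2 : Tendsto (fun c : ℝ =>
      Real.log ((Real.sqrt (1/4 + 1/c) - 1/2) / (Real.sqrt (1/4 + 1/c) + 1/2)))
      (nhdsWithin 0 (Ioi 0)) (nhds 0) := by
    have hr : Tendsto (fun x : ℝ => (x - 1/2) / (x + 1/2)) atTop (nhds 1) := by
      have hx : Tendsto (fun x : ℝ => 1 - 1/(x + 1/2)) atTop (nhds 1) := by
        have : Tendsto (fun x : ℝ => 1/(x + 1/2)) atTop (nhds 0) := by
          simpa only [one_div, Function.comp_def, id] using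
            tendsto_inv_atTop_zero.comp (tendsto_atTop_add_const_right atTop (1/2 : ℝ) tendsto_id)
        simpa using (tendsto_const_nhds (x := (1:ℝ))).sub this
      apply hx.congr'
      filter_upwards [eventually_gt_atTop (0:ℝ)] with x hx0
      field_simp
      ring
    have hlog : Tendsto Real.log (nhds 1) (nhds 0) := by
      have := (Real.continuousAt_log (by norm_num : (1:ℝ) ≠ 0)).tendsto
      rwa [Real.log_one] at this
    exact (hlog.comp hr).comp s_tendsto_atTop
  have H := h1.sub h2
  rw [sub_zero] at H
  exact H

lemma halfLength_tendsto_atTop : Tendsto halfLength atTop atTop := by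
  apply tendsto_atTop_mono' atTop (f₁ := fun c : ℝ => c / 2)
  · filter_upwards [eventually_gt_atTop (0:ℝ)] with c hc
    have hs := sqrt_gt_half hc
    have hlog : Real.log ((Real.sqrt (1/4 + 1/c) - 1/2) / (Real.sqrt (1/4 + 1/c) + 1/2)) ≤ 0 := by
      apply Real.log_nonpos
      · apply div_nonneg <;> linarith
      · rw [div_le_one (by linarith)]; linarith
    have : c / 2 ≤ c * Real.sqrt (1/4 + 1/c) := by nlinarith
    unfold halfLength; linarith
  · exact (tendsto_id.atTop_div_const two_pos)

lemma halfLength_continuousOn : ContinuousOn halfLength (Ioi 0) := by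
  have hg : ContinuousOn gAux (Ioi (1/2 : ℝ)) := fun x hx =>
    ((gAux_hasDerivAt hx).continuousAt).continuousWithinAt
  have hs : ContinuousOn (fun c : ℝ => Real.sqrt (1/4 + 1/c)) (Ioi 0) := by
    apply Real.continuous_sqrt.comp_continuousOn
    exact continuousOn_const.add (continuousOn_const.div continuousOn_id
      (fun x hx => ne_of_gt hx))
  have := hg.comp hs (fun c hc => mem_Ioi.mpr (sqrt_gt_half hc))
  exact this.congr (fun c hc => halfLength_eq hc)

/-- The function `h` is strictly increasing on `(0, ∞)`, tends to `0` at `0⁺`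
and to `+∞` at `+∞`; consequently for every `d > 0` there is exactly one `c₁ > 0` with
`h(c₁) = d`. -/
theorem halfLength_strictly_increasing :
    StrictMonoOn halfLength (Ioi 0) ∧
    Tendsto halfLength (nhdsWithin 0 (Ioi 0)) (nhds 0) ∧
    Tendsto halfLength atTop atTop ∧
    (∀ d : ℝ, 0 < d → ∃! c : ℝ, 0 < c ∧ halfLength c = d) := by
  refine ⟨halfLength_mono, halfLength_tendsto_zero, halfLength_tendsto_atTop, ?_⟩
  intro d hd
  obtain ⟨a, ha1, ha2⟩ :=
    ((halfLength_tendsto_zero.eventually_lt_const hd).and self_mem_nhdsWithin).exists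
  obtain ⟨b, hb1, hb2⟩ :=
    ((halfLength_tendsto_atTop.eventually_gt_atTop d).and (eventually_ge_atTop a)).exists
  have ha0 : (0:ℝ) < a := ha2
  have hb0 : (0:ℝ) < b := lt_of_lt_of_le ha0 hb2
  have hsub : Icc a b ⊆ Ioi (0:ℝ) := fun x hx => lt_of_lt_of_le ha0 hx.1
  obtain ⟨c, hc1, hc2⟩ := intermediate_value_Icc hb2 (halfLength_continuousOn.mono hsub)
    ⟨le_of_lt ha1, le_of_lt hb1⟩
  have hc0 : (0:ℝ) < c := lt_of_lt_of_le ha0 hc1.1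
  refine ⟨c, ⟨hc0, hc2⟩, ?_⟩
  rintro y ⟨hy0, hy⟩
  exact halfLength_mono.injOn (mem_Ioi.mpr hy0) (mem_Ioi.mpr hc0) (by rw [hy, hc2])
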